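/- For every m with √((5/2)(3 − 2√2)) ≤ m < 3/4, there exists a right triangle with legs a, b > 0 such that (m_a + m_b)/(a + b + c) = m, where c = √(a²+b²). -/

import Mathlib

theorem stmt_6 (m : ℝ) (h₁ : Real.sqrt ((5/2) * (3 - 2 * Real.sqrt 2)) ≤ m) (h₂ : m < 3/4) :
    ∃ a b : ℝ, 0 < a ∧ 0 < b ∧
      ((1/2) * Real.sqrt (4*b^2 + a^2) + (1/2) * Real.sqrt (4*a^2 + b^2)) /
        (a + b + Real.sqrt (a^2 + b^2)) = m := by
  set g : ℝ → ℝ := fun t =>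
    ((1/2) * Real.sqrt (4*t^2 + 1) + (1/2) * Real.sqrt (4 + t^2)) /
      (1 + t + Real.sqrt (1 + t^2)) with hg
  have s2nn : (0:ℝ) ≤ Real.sqrt 2 := Real.sqrt_nonneg 2
  have s2sq : Real.sqrt 2 ^ 2 = 2 := Real.sq_sqrt (by norm_num)
  have s2le : Real.sqrt 2 ≤ 2 := by
    nlinarith [s2sq, s2nn]
  have s5nn : (0:ℝ) ≤ Real.sqrt 5 := Real.sqrt_nonneg 5
  -- denominator positive on [0,1]
  have hden : ∀ t ∈ Set.Icc (0:ℝ) 1, (1 + t + Real.sqrt (1 + t^2)) ≠ 0 := by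
    intro t ht
    have : 0 < 1 + t + Real.sqrt (1 + t^2) := by
      have := Real.sqrt_nonneg (1 + t^2)
      nlinarith [ht.1]
    linarith
  have hcont : ContinuousOn g (Set.Icc (0:ℝ) 1) := by
    apply ContinuousOn.div
    · apply Continuous.continuousOn
      continuity
    · apply Continuous.continuousOn
      continuity
    · exact hden
  -- g 0 = 3/4
  have hg0 : g 0 = 3/4 := by
    simp only [hg]
    norm_num
  -- g 1 = sqrt ((5/2)*(3 - 2*sqrt 2))
  have hg1 : g 1 = Real.sqrt ((5/2) * (3 - 2 * Real.sqrt 2)) := by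
    have key : Real.sqrt ((5/2) * (3 - 2 * Real.sqrt 2)) = Real.sqrt 5 * (2 - Real.sqrt 2) / 2 := by
      have : (5/2) * (3 - 2 * Real.sqrt 2) = 5 * ((2 - Real.sqrt 2)/2)^2 := by
        nlinarith [s2sq]
      rw [this, Real.sqrt_mul (by norm_num), Real.sqrt_sq (by linarith)]
      ring
    simp only [hg]
    rw [key]
    norm_num
    have hne : (2 + Real.sqrt 2) ≠ 0 := by positivity
    field_simp
    nlinarith [s2sq]
  -- IVT
  have hsub := intermediate_value_Icc' (by norm_num : (0:ℝ) ≤ 1) hcont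
  have hm : m ∈ Set.Icc (g 1) (g 0) := by
    rw [hg0, hg1]; exact ⟨h₁, h₂.le⟩
  obtain ⟨t, ht, hgt⟩ := hsub hm
  have htpos : 0 < t := by
    rcases lt_or_eq_of_le ht.1 with h | h
    · exact h
    · exfalso; rw [← h] at hgt; rw [hg0] at hgt; linarith [hgt ▸ h₂]
  refine ⟨1, t, one_pos, htpos, ?_⟩
  have : ((1/2) * Real.sqrt (4*t^2 + 1^2) + (1/2) * Real.sqrt (4*1^2 + t^2)) /
        (1 + t + Real.sqrt (1^2 + t^2)) = g t := by
    simp only [hg]; norm_num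
  rw [this, hgt]
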